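/- Let μ be a strictly positive probability distribution on a finite product space and G a DAG representing it (μ factorizes according to G and the factorization is minimal). Then for any three pairwise disjoint coordinate sets A, B, K: if K d-separates A from B in G, then A and B are conditionally independent given K under μ. -/

import Mathlib

/-- The path `l` has a collider at position `t+1`: both neighboring edges point into it. -/
def ColliderAt {V : Type*} (E : V → V → Prop) (l : List V) (t : ℕ) : Prop :=
  ∃ a w b, l[t]? = some a ∧ l[t+1]? = some w ∧ l[t+2]? = some b ∧ E a w ∧ E b w

/-- The undirected path `l` is blocked by the set `K`: some interior non-collider
vertex lies in `K`, or some collider `w` is such that neither `w` nor any descendant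
of `w` lies in `K`. -/
def Blocked {V : Type*} (E : V → V → Prop) (K : Set V) (l : List V) : Prop :=
  (∃ t w, l[t+1]? = some w ∧ t + 2 < l.length ∧ ¬ ColliderAt E l t ∧ w ∈ K) ∨
  (∃ t w, l[t+1]? = some w ∧ ColliderAt E l t ∧ w ∉ K ∧
    ∀ d, Relation.TransGen E w d → d ∉ K)

/-- `l` is an undirected path from `u` to `v`: a list of distinct vertices starting at
`u`, ending at `v`, with consecutive vertices joined by an edge in either direction. -/
def IsUPath {V : Type*} (E : V → V → Prop) (u v : V) (l : List V) : Prop :=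
  l.Nodup ∧ l.head? = some u ∧ l.getLast? = some v ∧
    l.Chain' (fun a b => E a b ∨ E b a)

/-- `K` d-separates `I` from `J`: every undirected path between a vertex of `I` and a
vertex of `J` is blocked by `K`. -/
def DSep {V : Type*} (E : V → V → Prop) (I J K : Set V) : Prop :=
  ∀ u ∈ I, ∀ v ∈ J, ∀ l : List V, IsUPath E u v l → Blocked E K l

open scoped Classical BigOperators

/-- Marginal of `μ` on the coordinate set `S`, evaluated at the realization `x`. -/
noncomputable def marg {N : ℕ} {X : Fin N → Type*} [∀ i, Fintype (X i)]
    (μ : (∀ i, X i) → ℝ) (S : Finset (Fin N)) (x : ∀ i, X i) : ℝ :=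
  ∑ y : ∀ i, X i, if ∀ i ∈ S, y i = x i then μ y else 0

/-- Conditional probability `μ(x_i | x_S)`, defined as a ratio of marginals. -/
noncomputable def condP {N : ℕ} {X : Fin N → Type*} [∀ i, Fintype (X i)]
    (μ : (∀ i, X i) → ℝ) (i : Fin N) (S : Finset (Fin N)) (x : ∀ i, X i) : ℝ :=
  marg μ (insert i S) x / marg μ S x

/-- Conditional independence `A ⊥ B | C` under `μ`. -/
def CI {N : ℕ} {X : Fin N → Type*} [∀ i, Fintype (X i)]
    (μ : (∀ i, X i) → ℝ) (A B C : Finset (Fin N)) : Prop :=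
  ∀ x, marg μ (A ∪ B ∪ C) x / marg μ (B ∪ C) x = marg μ (A ∪ C) x / marg μ C x

namespace S14

variable {V : Type*} (E : V → V → Prop) (K : Set V)

/-- window condition at center `w` with neighbors `a`, `b`. -/
def WCond (a w b : V) : Prop :=
  ((E a w ∧ E b w) → (w ∈ K ∨ ∃ d, Relation.TransGen E w d ∧ d ∈ K)) ∧
  (¬ (E a w ∧ E b w) → w ∉ K)

/-- recursive "active" predicate on lists. -/
def ActR : List V → Prop
  | a :: w :: b :: l => WCond E K a w b ∧ ActR (w :: b :: l)
  | _ => True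

theorem wcond_symm {a w b : V} (h : WCond E K a w b) : WCond E K b w a :=
  ⟨fun ⟨h1, h2⟩ => h.1 ⟨h2, h1⟩, fun hn => h.2 (fun ⟨h1, h2⟩ => hn ⟨h2, h1⟩)⟩

theorem actR_short : ∀ {l : List V}, l.length ≤ 2 → ActR E K l
  | [], _ => trivial
  | [_], _ => trivial
  | [_, _], _ => trivial
  | _ :: _ :: _ :: _, h => by simp at h

theorem actR_tail : ∀ {x : V} {l : List V}, ActR E K (x :: l) → ActR E K l
  | _, [], _ => trivial
  | _, [_], _ => trivial
  | _, _ :: _ :: _, h => h.2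

theorem actR_suffix : ∀ (xs ys : List V), ActR E K (xs ++ ys) → ActR E K ys
  | [], _, h => h
  | _ :: xs, ys, h => actR_suffix xs ys (actR_tail E K h)

theorem actR_prefix : ∀ (xs ys : List V), ActR E K (xs ++ ys) → ActR E K xs
  | [], _, _ => trivial
  | [_], _, _ => trivial
  | [_, _], _, _ => trivial
  | _ :: w :: b :: t, ys, h => ⟨h.1, actR_prefix (w :: b :: t) ys h.2⟩

theorem actR_window : ∀ (xs : List V) (a w b : V) (ys : List V),
    ActR E K (xs ++ a :: w :: b :: ys) → WCond E K a w b := fun xs a w b ys h =>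
  (actR_suffix E K xs _ h).1

theorem actR_glue : ∀ (xs : List V) (v : V) (ys : List V),
    ActR E K (xs ++ [v]) → ActR E K (v :: ys) →
    (∀ u y, xs.getLast? = some u → ys.head? = some y → WCond E K u v y) →
    ActR E K (xs ++ v :: ys)
  | [], v, ys, _, h2, _ => h2
  | [u], v, ys, _, h2, hj => by
      cases ys with
      | nil => trivial
      | cons y ys' => exact ⟨hj u y rfl rfl, h2⟩
  | a :: b :: xs', v, ys, h1, h2, hj => by
      cases xs' with
      | nil =>
          have hrec := actR_glue [b] v ys trivial h2
            (fun u y hu hy => hj u y (by simpa using hu) hy)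
          exact ⟨h1.1, hrec⟩
      | cons c xs'' =>
          have hrec := actR_glue (b :: c :: xs'') v ys h1.2 h2
            (fun u y hu hy => hj u y (by rw [List.getLast?_cons_cons]; exact hu) hy)
          exact ⟨h1.1, hrec⟩
termination_by xs _ _ => xs.length

theorem actR_forall {l : List V} (h : ActR E K l) :
    ∀ t a w b, l[t]? = some a → l[t+1]? = some w → l[t+2]? = some b → WCond E K a w b := by
  intro t
  induction t generalizing l with
  | zero =>
    intro a w b ha hw hb
    match l with
    | a' :: w' :: b' :: l' =>
      simp only [List.getElem?_cons_zero, List.getElem?_cons_succ, Option.some_inj] at ha hw hb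
      subst ha; subst hw; subst hb; exact h.1
  | succ t ih =>
    intro a w b ha hw hb
    match l with
    | x :: l' =>
      simp only [List.getElem?_cons_succ] at ha hw hb
      exact ih (actR_tail E K h) a w b ha hw hb

theorem forall_actR : ∀ (l : List V),
    (∀ t a w b, l[t]? = some a → l[t+1]? = some w → l[t+2]? = some b → WCond E K a w b) →
    ActR E K l
  | [], _ => trivial
  | [_], _ => trivial
  | [_, _], _ => trivial
  | a :: w :: b :: t, h =>
    ⟨h 0 a w b (by simp) (by simp) (by simp),
     forall_actR (w :: b :: t) (fun t' a' w' b' ha hw hb =>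
       h (t'+1) a' w' b' (by simpa using ha) (by simpa using hw) (by simpa using hb))⟩

theorem actR_reverse {l : List V} (h : ActR E K l) : ActR E K l.reverse := by
  apply forall_actR
  intro t a w b ha hw hb
  have hlen : t + 2 < l.length := by
    have := List.getElem?_eq_some_iff.1 hb
    simpa using this.1
  have h1 : l.reverse[t]? = l[l.length - 1 - t]? := List.getElem?_reverse (by omega)
  have h2 : l.reverse[t+1]? = l[l.length - 1 - (t+1)]? := List.getElem?_reverse (by omega)
  have h3 : l.reverse[t+2]? = l[l.length - 1 - (t+2)]? := List.getElem?_reverse (by omega)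
  rw [h1] at ha; rw [h2] at hw; rw [h3] at hb
  have e1 : l.length - 1 - t = (l.length - 1 - (t+2)) + 2 := by omega
  have e2 : l.length - 1 - (t+1) = (l.length - 1 - (t+2)) + 1 := by omega
  rw [e1] at ha; rw [e2] at hw
  exact wcond_symm E K (actR_forall E K h _ b w a hb hw ha)



theorem two_cycle_absurd (hacy : ∀ v : V, ¬ Relation.TransGen E v v) {a b : V}
    (h1 : E a b) (h2 : E b a) : False :=
  hacy a ((Relation.TransGen.single h1).trans (Relation.TransGen.single h2))

theorem run_lemma (hacy : ∀ v : V, ¬ Relation.TransGen E v v) (v₀ : V) :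
    ∀ (seg : List V) (p w : V), E p w → Relation.TransGen E v₀ w →
      ActR E K (p :: w :: seg) →
      List.Chain' (fun a b => E a b ∨ E b a) (w :: seg) →
      (w :: seg).getLast? = some v₀ →
      ∃ d, Relation.TransGen E v₀ d ∧ d ∈ K
  | [], p, w, hpw, hvw, hact, hch, hlast => by
      simp at hlast; subst hlast; exact absurd hvw (hacy _)
  | y :: seg', p, w, hpw, hvw, hact, hch, hlast => by
      rcases List.isChain_cons_cons.1 hch with ⟨hwy, hch'⟩
      rcases hwy with hwy | hyw
      · exact run_lemma hacy v₀ seg' w y hwy (hvw.tail hwy) hact.2 hch'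
          (by rwa [List.getLast?_cons_cons] at hlast)
      · rcases hact.1.1 ⟨hpw, hyw⟩ with hK | ⟨d, hd, hdK⟩
        · exact ⟨w, hvw, hK⟩
        · exact ⟨d, hvw.trans hd, hdK⟩

theorem fwd_append (hacy : ∀ v : V, ¬ Relation.TransGen E v v) :
    ∀ (ds xs : List V) (w : V),
    ActR E K (xs ++ [w]) → List.Chain E w ds → w ∉ K →
    (∀ d ∈ ds.dropLast, d ∉ K) → ActR E K (xs ++ w :: ds)
  | [], xs, w, h, _, _, _ => h
  | d :: ds', xs, w, h, hch, hwK, hint => by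
      rcases List.chain_cons.1 hch with ⟨hwd, hch'⟩
      have step : ActR E K ((xs ++ [w]) ++ [d]) := by
        rw [List.append_assoc]
        exact actR_glue E K xs w [d] h (actR_short E K (by simp))
          (fun u y hu hy => by
            simp only [List.head?_cons, Option.some_inj] at hy; subst hy
            exact ⟨fun hcol => absurd hcol.2 (fun hdw => two_cycle_absurd E hacy hwd hdw),
              fun _ => hwK⟩)
      cases ds' with
      | nil => rw [List.append_assoc] at step; exact step
      | cons d2 ds'' =>
        have hd : d ∉ K := hint d (by rw [List.dropLast_cons₂]; exact List.mem_cons_self)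
        have hrec := fwd_append hacy (d2 :: ds'') (xs ++ [w]) d step hch' hd
          (fun e he => hint e (by rw [List.dropLast_cons₂]; exact List.mem_cons_of_mem _ he))
        rw [List.append_assoc] at hrec; exact hrec
termination_by ds _ _ => ds.length

theorem exists_dup_split : ∀ {l : List V}, ¬ l.Nodup →
    ∃ (l₁ : List V) (v : V) (l₂ l₃ : List V), l = l₁ ++ v :: (l₂ ++ v :: l₃) := by
  intro l
  induction l with
  | nil => intro h; exact absurd List.nodup_nil h
  | cons x xs ih =>
    intro h
    rw [List.nodup_cons] at h
    by_cases hx : x ∈ xs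
    · obtain ⟨s, t, rfl⟩ := List.append_of_mem hx
      exact ⟨[], x, s, t, rfl⟩
    · have hxs : ¬ xs.Nodup := fun hn => h ⟨hx, hn⟩
      obtain ⟨l₁, v, l₂, l₃, rfl⟩ := ih hxs
      exact ⟨x :: l₁, v, l₂, l₃, rfl⟩

theorem dedup (hacy : ∀ v : V, ¬ Relation.TransGen E v v)
    (l : List V) (hc : List.Chain' (fun a b => E a b ∨ E b a) l) (ha : ActR E K l) :
    ∃ l', l'.Nodup ∧ l'.head? = l.head? ∧ l'.getLast? = l.getLast? ∧
      List.Chain' (fun a b => E a b ∨ E b a) l' ∧ ActR E K l' := by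
  suffices H : ∀ n (l : List V), l.length = n →
      List.Chain' (fun a b => E a b ∨ E b a) l → ActR E K l →
      ∃ l', l'.Nodup ∧ l'.head? = l.head? ∧ l'.getLast? = l.getLast? ∧
        List.Chain' (fun a b => E a b ∨ E b a) l' ∧ ActR E K l' by
    exact H _ l rfl hc ha
  clear hc ha l
  intro n
  induction n using Nat.strong_induction_on with
  | _ n ih =>
  intro l hn hc ha
  by_cases hnd : l.Nodup
  · exact ⟨l, hnd, rfl, rfl, hc, ha⟩
  obtain ⟨l₁, v, l₂, l₃, rfl⟩ := exists_dup_split hnd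
  rcases List.isChain_append.1 hc with ⟨hcl₁, hcr, hjunc⟩
  -- the new shorter list
  have hhead : (l₁ ++ v :: l₃).head? = (l₁ ++ v :: (l₂ ++ v :: l₃)).head? := by
    cases l₁ <;> simp
  have hlast : (l₁ ++ v :: l₃).getLast? = (l₁ ++ v :: (l₂ ++ v :: l₃)).getLast? := by
    rw [List.getLast?_append_cons,
      show l₁ ++ v :: (l₂ ++ v :: l₃) = (l₁ ++ v :: l₂) ++ v :: l₃ by simp,
      List.getLast?_append_cons]
  have hcv3 : List.Chain' (fun a b => E a b ∨ E b a) (v :: l₃) :=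
    List.IsChain.right_of_append (l₁ := v :: l₂) (l₂ := v :: l₃) hcr
  have hcnew : List.Chain' (fun a b => E a b ∨ E b a) (l₁ ++ v :: l₃) :=
    List.isChain_append.2 ⟨hcl₁, hcv3, fun x hx y hy => hjunc x hx y (by simp at hy ⊢; exact hy)⟩
  have hpre : ActR E K (l₁ ++ [v]) := by
    apply actR_prefix E K (l₁ ++ [v]) (l₂ ++ v :: l₃)
    rw [List.append_assoc]; exact ha
  have hsuf : ActR E K (v :: l₃) := by
    apply actR_suffix E K (l₁ ++ v :: l₂) (v :: l₃)
    rw [show (l₁ ++ v :: l₂) ++ v :: l₃ = l₁ ++ v :: (l₂ ++ v :: l₃) by simp]; exact ha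
  have hanew : ActR E K (l₁ ++ v :: l₃) := by
    apply actR_glue E K l₁ v l₃ hpre hsuf
    intro u y hu hy
    obtain ⟨l₁', rfl⟩ := List.getLast?_eq_some_iff.1 hu
    obtain ⟨l₃', rfl⟩ : ∃ t, l₃ = y :: t := by
      cases l₃ with
      | nil => simp at hy
      | cons a t => simp at hy; exact ⟨t, by rw [hy]⟩
    obtain ⟨h₂, l₂', rfl⟩ : ∃ h₂ l₂', l₂ = h₂ :: l₂' := by
      cases l₂ with
      | nil =>
        exfalso
        rcases List.isChain_cons_cons.1 hcr with ⟨hvv, -⟩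
        exact hvv.elim (fun h => hacy v (Relation.TransGen.single h))
          (fun h => hacy v (Relation.TransGen.single h))
      | cons a t => exact ⟨a, t, rfl⟩
    have window1 : WCond E K u v h₂ := by
      apply actR_window E K l₁' u v h₂ (l₂' ++ v :: y :: l₃')
      rw [show l₁' ++ u :: v :: h₂ :: (l₂' ++ v :: y :: l₃')
          = (l₁' ++ [u]) ++ v :: ((h₂ :: l₂') ++ v :: y :: l₃') by simp]
      exact ha
    have hg₂ : ((v :: h₂ :: l₂').getLast (by simp)) = (v :: h₂ :: l₂').getLast (by simp) := rfl
    obtain ⟨m', hm⟩ := List.getLast?_eq_some_iff.1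
      (List.getLast?_eq_getLast (l := v :: h₂ :: l₂') (by simp))
    set g₂ := (v :: h₂ :: l₂').getLast (by simp) with hg₂def
    have window2 : WCond E K g₂ v y := by
      apply actR_window E K ((l₁' ++ [u]) ++ m') g₂ v y l₃'
      rw [show ((l₁' ++ [u]) ++ m') ++ g₂ :: v :: y :: l₃'
          = (l₁' ++ [u]) ++ ((m' ++ [g₂]) ++ v :: y :: l₃') by simp]
      rw [← hm]
      rw [show (l₁' ++ [u]) ++ ((v :: h₂ :: l₂') ++ v :: y :: l₃')
          = (l₁' ++ [u]) ++ v :: ((h₂ :: l₂') ++ v :: y :: l₃') by simp]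
      exact ha
    constructor
    · rintro ⟨huv, hyv⟩
      by_cases hh : E h₂ v
      · exact window1.1 ⟨huv, hh⟩
      · have hvh : E v h₂ := by
          rcases List.isChain_cons_cons.1 hcr with ⟨hvh2, -⟩
          exact hvh2.resolve_right hh
        have hseg_act : ActR E K (v :: h₂ :: (l₂' ++ [v])) := by
          apply actR_prefix E K (v :: h₂ :: (l₂' ++ [v])) (y :: l₃')
          apply actR_suffix E K (l₁' ++ [u])
          rw [show (l₁' ++ [u]) ++ ((v :: h₂ :: (l₂' ++ [v])) ++ y :: l₃')
              = (l₁' ++ [u]) ++ v :: ((h₂ :: l₂') ++ v :: y :: l₃') by simp]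
          exact ha
        have hseg_ch : List.Chain' (fun a b => E a b ∨ E b a) (h₂ :: (l₂' ++ [v])) := by
          have h1 := (List.isChain_cons_cons.1 hcr).2
          apply List.IsChain.left_of_append (l₁ := h₂ :: (l₂' ++ [v])) (l₂ := y :: l₃')
          rw [show (h₂ :: (l₂' ++ [v])) ++ y :: l₃' = (h₂ :: l₂') ++ v :: y :: l₃' by simp]
          exact h1
        obtain ⟨d, hd, hdK⟩ := run_lemma E K hacy v (l₂' ++ [v]) v h₂ hvh
          (Relation.TransGen.single hvh) hseg_act hseg_ch (List.getLast?_concat (l := h₂ :: l₂'))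
        exact Or.inr ⟨d, hd, hdK⟩
    · intro hnc hvK
      have e1 : E u v ∧ E h₂ v := by
        by_contra hne; exact (window1.2 hne) hvK
      have e2 : E g₂ v ∧ E y v := by
        by_contra hne; exact (window2.2 hne) hvK
      exact hnc ⟨e1.1, e2.2⟩
  obtain ⟨l', h1, h2, h3, h4, h5⟩ := ih (l₁ ++ v :: l₃).length
    (by subst hn; simp) _ rfl hcnew hanew
  exact ⟨l', h1, h2.trans hhead, h3.trans hlast, h4, h5⟩

theorem act_not_blocked {l : List V} (h : ActR E K l) : ¬ Blocked E K l := by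
  rintro (⟨t, w, hw, hlen, hnc, hK⟩ | ⟨t, w, hw, hcol, hwK, hall⟩)
  · have ha : l[t]? = some (l[t]'(by omega)) := List.getElem?_eq_getElem (by omega)
    have hb : l[t+2]? = some (l[t+2]'(by omega)) := List.getElem?_eq_getElem (by omega)
    have hwc := actR_forall E K h t _ w _ ha hw hb
    have hncol : ¬ (E (l[t]'(by omega)) w ∧ E (l[t+2]'(by omega)) w) :=
      fun hcl => hnc ⟨_, w, _, ha, hw, hb, hcl.1, hcl.2⟩
    exact (hwc.2 hncol) hK
  · obtain ⟨a, w', b, ha, hw', hb, h1, h2⟩ := hcol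
    have hww : w' = w := by rw [hw] at hw'; exact (Option.some_inj.1 hw').symm
    subst hww
    rcases (actR_forall E K h t a w' b ha hw hb).1 ⟨h1, h2⟩ with hK | ⟨d, hd, hdK⟩
    · exact hwK hK
    · exact hall d hd hdK



theorem graph_main {V : Type*} [DecidableEq V] (E : V → V → Prop)
    (hacy : ∀ v, ¬ Relation.TransGen E v v)
    (A B K W : Finset V)
    (hAW : A ⊆ W) (hBW : B ⊆ W)
    (hWanc : ∀ c ∈ W, c ∈ A ∪ B ∪ K ∨ ∃ u ∈ A ∪ B ∪ K, Relation.TransGen E c u)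
    (hAK : Disjoint A K) (hBK : Disjoint B K)
    (hsep : DSep E (↑A) (↑B) (↑K)) :
    ∃ TA TB : Finset V, A ⊆ TA ∧ B ⊆ TB ∧ TA ∪ TB = W \ K ∧ Disjoint TA TB ∧
      ∀ i ∈ W, ∀ u v : V, (u = i ∨ E u i) → (v = i ∨ E v i) → ¬ (u ∈ TA ∧ v ∈ TB) := by
  classical
  have NoConn : ∀ a ∈ A, ∀ b ∈ B, ∀ l : List V, l.head? = some a → l.getLast? = some b →
      List.Chain' (fun a b => E a b ∨ E b a) l → ActR E (↑K) l → False := by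
    intro a ha b hb l hh hl hc hact
    obtain ⟨l', hnd, h2, h3, h4, h5⟩ := dedup E (↑K) hacy l hc hact
    exact act_not_blocked E (↑K) h5
      (hsep a (by simpa) b (by simpa) l' ⟨hnd, h2.trans hh, h3.trans hl, h4⟩)
  have chain_tg : ∀ (ds : List V) (c z : V), ds ≠ [] → List.Chain E c ds →
      (c :: ds).getLast? = some z → Relation.TransGen E c z := by
    intro ds
    induction ds with
    | nil => intro c z h; exact absurd rfl h
    | cons d ds ih =>
      intro c z _ hch hz
      rcases List.chain_cons.1 hch with ⟨hcd, hch'⟩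
      rw [List.getLast?_cons_cons] at hz
      cases ds with
      | nil =>
        simp only [List.getLast?_singleton, Option.some_inj] at hz
        subst hz; exact Relation.TransGen.single hcd
      | cons e ds' =>
        exact (Relation.TransGen.single hcd).trans (ih d z (by simp) hch' hz)
  have tg_chain : ∀ (c u : V), Relation.TransGen E c u →
      ∃ ds : List V, ds ≠ [] ∧ List.Chain E c ds ∧ (c :: ds).getLast? = some u := by
    intro c u h
    induction h using Relation.TransGen.head_induction_on with
    | single h => exact ⟨[u], by simp, List.chain_cons.2 ⟨h, List.Chain.nil⟩, by simp⟩
    | head hab _ ihh =>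
      obtain ⟨ds, hne, hch, hlast⟩ := ihh
      rename_i a b _
      exact ⟨b :: ds, by simp, List.chain_cons.2 ⟨hab, hch⟩,
        by rw [List.getLast?_cons_cons]; exact hlast⟩
  have trunc : ∀ (ds : List V) (c : V), List.Chain E c ds →
      (∃ z, (c :: ds).getLast? = some z ∧ z ∈ A ∪ B ∪ K) →
      ∃ ds', List.Chain E c ds' ∧ (∃ z, (c :: ds').getLast? = some z ∧ z ∈ A ∪ B ∪ K) ∧
        ∀ d ∈ (c :: ds').dropLast, d ∉ A ∪ B ∪ K := by
    intro ds
    induction ds with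
    | nil => intro c _ hz; exact ⟨[], List.Chain.nil, hz, by simp⟩
    | cons d ds ih =>
      intro c hch hz
      by_cases hc : c ∈ A ∪ B ∪ K
      · exact ⟨[], List.Chain.nil, ⟨c, by simp, hc⟩, by simp⟩
      · rcases List.chain_cons.1 hch with ⟨hcd, hch'⟩
        obtain ⟨ds', h1, h2, h3⟩ := ih d hch' (by rwa [List.getLast?_cons_cons] at hz)
        refine ⟨d :: ds', List.chain_cons.2 ⟨hcd, h1⟩,
          by rwa [List.getLast?_cons_cons], ?_⟩
        intro e he
        rw [List.dropLast_cons₂] at he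
        rcases List.mem_cons.1 he with rfl | he
        · exact hc
        · exact h3 e he
  have hdp : ∀ c ∈ W, ∃ ds : List V, List.Chain E c ds ∧
      (∃ z, (c :: ds).getLast? = some z ∧ z ∈ A ∪ B ∪ K) ∧
      ∀ d ∈ (c :: ds).dropLast, d ∉ A ∪ B ∪ K := by
    intro c hc
    rcases hWanc c hc with hin | ⟨u, hu, htg⟩
    · exact ⟨[], List.Chain.nil, ⟨c, by simp, hin⟩, by simp⟩
    · obtain ⟨ds, hne, hch, hlast⟩ := tg_chain c u htg
      exact trunc ds c hch ⟨u, hlast, hu⟩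
  -- extend a walk ending at w by a directed chain
  have ext_fwd : ∀ (l : List V) (w : V), l.getLast? = some w →
      List.Chain' (fun a b => E a b ∨ E b a) l → ActR E (↑K) l →
      w ∉ K → ∀ ds, List.Chain E w ds → (∀ d ∈ ds.dropLast, d ∉ K) →
      ∃ l2 : List V, l2.head? = l.head? ∧ l2.getLast? = (w :: ds).getLast? ∧
        List.Chain' (fun a b => E a b ∨ E b a) l2 ∧ ActR E (↑K) l2 := by
    intro l w hl hc ha hwK ds hch hint
    obtain ⟨xs, rfl⟩ := List.getLast?_eq_some_iff.1 hl
    refine ⟨xs ++ w :: ds, by cases xs <;> simp, List.getLast?_append_cons _ _ _, ?_,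
      fwd_append E (↑K) hacy ds xs w ha hch (by simpa using hwK)
        (fun d hd => by simpa using hint d hd)⟩
    rcases List.isChain_append.1 hc with ⟨h1, _, h3⟩
    exact List.isChain_append.2 ⟨h1,
      show List.Chain' _ (w :: ds) from List.IsChain.imp (fun ⦃_ _⦄ h => Or.inl h) hch,
      fun x hx y hy => h3 x hx y (by simpa using hy)⟩
  -- walk from the end of a directed chain, up to its root, then to v
  have ext_revA : ∀ (v c : V) (ds : List V) (a : V), E v c → c ∉ K →
      List.Chain E c ds → (∀ d ∈ ds.dropLast, d ∉ K) → (c :: ds).getLast? = some a →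
      ∃ l2 : List V, l2.head? = some a ∧ l2.getLast? = some v ∧
        List.Chain' (fun a b => E a b ∨ E b a) l2 ∧ ActR E (↑K) l2 := by
    intro v c ds a hvc hcK hch hint hlast
    have hfwd : ActR E (↑K) ([v] ++ c :: ds) :=
      fwd_append E (↑K) hacy ds [v] c (actR_short _ _ (by simp)) hch
        (by simpa using hcK) (fun d hd => by simpa using hint d hd)
    have hch' : List.Chain' (fun a b => E a b ∨ E b a) (v :: c :: ds) :=
      List.isChain_cons_cons.2 ⟨Or.inl hvc,
        show List.Chain' _ (c :: ds) from List.IsChain.imp (fun ⦃_ _⦄ h => Or.inl h) hch⟩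
    refine ⟨(v :: c :: ds).reverse, ?_, ?_, ?_, actR_reverse E (↑K) hfwd⟩
    · rw [List.head?_reverse, List.getLast?_cons_cons]; exact hlast
    · rw [List.getLast?_reverse]; rfl
    · unfold List.Chain'; rw [List.isChain_reverse]
      exact List.IsChain.imp (fun ⦃a b⦄ h => h.symm) hch'
  -- the connectivity predicate
  set Con : V → Prop := fun v => v ∈ W ∧ v ∉ K ∧ ∃ a ∈ A, ∃ l : List V,
    l.head? = some a ∧ l.getLast? = some v ∧
    List.Chain' (fun a b => E a b ∨ E b a) l ∧ ActR E (↑K) l with hCon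
  have ext : ∀ w v, Con w → v ∈ W → v ∉ K →
      (E w v ∨ E v w ∨ ∃ c ∈ W, E w c ∧ E v c) → Con v := by
    intro w v hw hvW hvK hrel
    obtain ⟨hwW, hwK, a, haA, l, hh, hl, hc, ha⟩ := hw
    rcases hrel with hEwv | hEvw | ⟨c, hcW, hEwc, hEvc⟩
    · -- simple edge w → v : never a collider at w
      obtain ⟨l2, g1, g2, g3, g4⟩ := ext_fwd l w hl hc ha hwK [v]
        (List.chain_cons.2 ⟨hEwv, List.Chain.nil⟩) (by simp)
      exact ⟨hvW, hvK, a, haA, l2, g1.trans hh, by rw [g2]; simp, g3, g4⟩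
    · -- edge v → w : a collider at w may arise; use the descent from w
      obtain ⟨ds, hch, ⟨z, hz, hzmem⟩, hint⟩ := hdp w hwW
      have hint' : ∀ d ∈ ds.dropLast, d ∉ K := by
        intro d hd
        have : d ∈ (w :: ds).dropLast := by
          cases ds with
          | nil => simp at hd
          | cons e t => rw [List.dropLast_cons₂]; exact List.mem_cons_of_mem _ hd
        intro hdK; exact hint d this (by simp [hdK])
      rcases Finset.mem_union.1 hzmem with hzAB | hzK
      rcases Finset.mem_union.1 hzAB with hzA | hzB
      · -- descent ends in A : build a fresh walk from z to v
        obtain ⟨l2, g1, g2, g3, g4⟩ := ext_revA v w ds z hEvw hwK hch hint' hz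
        exact ⟨hvW, hvK, z, hzA, l2, g1, g2, g3, g4⟩
      · -- descent ends in B : contradiction with NoConn
        exfalso
        obtain ⟨l2, g1, g2, g3, g4⟩ := ext_fwd l w hl hc ha hwK ds hch hint'
        exact NoConn a haA z hzB l2 (g1.trans hh) (by rw [g2]; exact hz) g3 g4
      · -- descent ends in K : the collider at w is activated
        have hdesc : w ∈ (↑K : Set V) ∨ ∃ d, Relation.TransGen E w d ∧ d ∈ (↑K : Set V) := by
          cases ds with
          | nil =>
            simp only [List.getLast?_singleton, Option.some_inj] at hz
            subst hz; exact absurd hzK hwK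
          | cons e t =>
            exact Or.inr ⟨z, chain_tg (e :: t) w z (by simp) hch hz, by simpa using hzK⟩
        obtain ⟨xs, rfl⟩ := List.getLast?_eq_some_iff.1 hl
        refine ⟨hvW, hvK, a, haA, xs ++ w :: [v], ?_, ?_, ?_, ?_⟩
        · rw [← hh]; cases xs <;> simp
        · rw [List.getLast?_append_cons]; simp
        · rcases List.isChain_append.1 hc with ⟨h1, _, h3⟩
          exact List.isChain_append.2 ⟨h1,
            List.isChain_cons_cons.2 ⟨Or.inr hEvw, by simp⟩,
            fun x hx y hy => h3 x hx y (by simpa using hy)⟩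
        · apply actR_glue E (↑K) xs w [v] ha (actR_short _ _ (by simp))
          intro u y hu hy
          simp only [List.head?_cons, Option.some_inj] at hy; subst hy
          exact ⟨fun _ => hdesc, fun _ => by simpa using hwK⟩
    · -- marriage edge via common child c
      obtain ⟨ds, hch, ⟨z, hz, hzmem⟩, hint⟩ := hdp c hcW
      have hint' : ∀ d ∈ ds.dropLast, d ∉ K := by
        intro d hd
        have : d ∈ (c :: ds).dropLast := by
          cases ds with
          | nil => simp at hd
          | cons e t => rw [List.dropLast_cons₂]; exact List.mem_cons_of_mem _ hd
        intro hdK; exact hint d this (by simp [hdK])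
      by_cases hcK : c ∈ K
      · -- c itself in K : collider at c active
        obtain ⟨xs, rfl⟩ := List.getLast?_eq_some_iff.1 hl
        have step1 : ActR E (↑K) ((xs ++ [w]) ++ [c]) := by
          rw [List.append_assoc]
          apply actR_glue E (↑K) xs w [c] ha (actR_short _ _ (by simp))
          intro u y hu hy
          simp only [List.head?_cons, Option.some_inj] at hy; subst hy
          exact ⟨fun hcol => absurd hcol.2 (fun h => two_cycle_absurd E hacy hEwc h),
            fun _ => by simpa using hwK⟩
        refine ⟨hvW, hvK, a, haA, (xs ++ [w]) ++ c :: [v], ?_, ?_, ?_, ?_⟩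
        · rw [← hh]; cases xs <;> simp
        · rw [List.getLast?_append_cons]; simp
        · rcases List.isChain_append.1 hc with ⟨h1, _, h3⟩
          rw [List.append_assoc]
          apply List.isChain_append.2
          refine ⟨h1, ?_, fun x hx y hy => h3 x hx y (by simpa using hy)⟩
          exact List.isChain_cons_cons.2 ⟨Or.inl hEwc,
            List.isChain_cons_cons.2 ⟨Or.inr hEvc, by simp⟩⟩
        · apply actR_glue E (↑K) (xs ++ [w]) c [v] step1 (actR_short _ _ (by simp))
          intro u y hu hy
          simp only [List.head?_cons, Option.some_inj] at hy; subst hy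
          rw [List.getLast?_concat] at hu
          have huw : u = w := (Option.some_inj.1 hu).symm
          subst huw
          exact ⟨fun _ => Or.inl (by simpa using hcK), fun hnc => absurd ⟨hEwc, hEvc⟩ hnc⟩
      · rcases Finset.mem_union.1 hzmem with hzAB | hzK
        rcases Finset.mem_union.1 hzAB with hzA | hzB
        · -- descent from c ends in A
          obtain ⟨l2, g1, g2, g3, g4⟩ := ext_revA v c ds z hEvc hcK hch hint' hz
          exact ⟨hvW, hvK, z, hzA, l2, g1, g2, g3, g4⟩
        · -- descent from c ends in B : contradiction
          exfalso
          obtain ⟨l2, g1, g2, g3, g4⟩ := ext_fwd l w hl hc ha hwK (c :: ds)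
            (List.chain_cons.2 ⟨hEwc, hch⟩)
            (by
              intro d hd
              cases ds with
              | nil => simp at hd
              | cons e t =>
                rw [List.dropLast_cons₂] at hd
                rcases List.mem_cons.1 hd with rfl | hd
                · exact hcK
                · exact hint' d hd)
          refine NoConn a haA z hzB l2 (g1.trans hh) ?_ g3 g4
          rw [g2, List.getLast?_cons_cons]; exact hz
        · -- descent from c ends in K : collider at c active
          have hdesc : c ∈ (↑K : Set V) ∨ ∃ d, Relation.TransGen E c d ∧ d ∈ (↑K : Set V) := by
            cases ds with
            | nil =>
              simp only [List.getLast?_singleton, Option.some_inj] at hz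
              subst hz; exact absurd hzK hcK
            | cons e t =>
              exact Or.inr ⟨z, chain_tg (e :: t) c z (by simp) hch hz, by simpa using hzK⟩
          obtain ⟨xs, rfl⟩ := List.getLast?_eq_some_iff.1 hl
          have step1 : ActR E (↑K) ((xs ++ [w]) ++ [c]) := by
            rw [List.append_assoc]
            apply actR_glue E (↑K) xs w [c] ha (actR_short _ _ (by simp))
            intro u y hu hy
            simp only [List.head?_cons, Option.some_inj] at hy; subst hy
            exact ⟨fun hcol => absurd hcol.2 (fun h => two_cycle_absurd E hacy hEwc h),
              fun _ => by simpa using hwK⟩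
          refine ⟨hvW, hvK, a, haA, (xs ++ [w]) ++ c :: [v], ?_, ?_, ?_, ?_⟩
          · rw [← hh]; cases xs <;> simp
          · rw [List.getLast?_append_cons]; simp
          · rcases List.isChain_append.1 hc with ⟨h1, _, h3⟩
            rw [List.append_assoc]
            apply List.isChain_append.2
            refine ⟨h1, ?_, fun x hx y hy => h3 x hx y (by simpa using hy)⟩
            exact List.isChain_cons_cons.2 ⟨Or.inl hEwc,
              List.isChain_cons_cons.2 ⟨Or.inr hEvc, by simp⟩⟩
          · apply actR_glue E (↑K) (xs ++ [w]) c [v] step1 (actR_short _ _ (by simp))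
            intro u y hu hy
            simp only [List.head?_cons, Option.some_inj] at hy; subst hy
            rw [List.getLast?_concat] at hu
            have huw : u = w := (Option.some_inj.1 hu).symm
            subst huw
            exact ⟨fun _ => hdesc, fun hnc => absurd ⟨hEwc, hEvc⟩ hnc⟩
  -- finish : define TA, TB
  refine ⟨(W \ K).filter (fun v => Con v), (W \ K).filter (fun v => ¬ Con v), ?_, ?_, ?_, ?_, ?_⟩
  · intro a ha
    refine Finset.mem_filter.2 ⟨Finset.mem_sdiff.2 ⟨hAW ha, Finset.disjoint_left.1 hAK ha⟩, ?_⟩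
    exact ⟨hAW ha, Finset.disjoint_left.1 hAK ha, a, ha, [a], rfl, rfl, List.isChain_singleton _, trivial⟩
  · intro b hb
    refine Finset.mem_filter.2 ⟨Finset.mem_sdiff.2 ⟨hBW hb, Finset.disjoint_left.1 hBK hb⟩, ?_⟩
    rintro ⟨-, -, a, haA, l, hh, hl, hc, ha⟩
    exact NoConn a haA b hb l hh hl hc ha
  · exact Finset.filter_union_filter_not_eq _ _
  · exact Finset.disjoint_filter_filter_not _ _ _
  · rintro i hiW u v hu hv ⟨huTA, hvTB⟩
    rw [Finset.mem_filter] at huTA hvTB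
    have hvWK := Finset.mem_sdiff.1 hvTB.1
    have hCu : Con u := huTA.2
    have : Con v := by
      apply ext u v hCu hvWK.1 hvWK.2
      rcases hu with rfl | hEu
      · rcases hv with rfl | hEv
        · exact absurd hCu hvTB.2
        · exact Or.inr (Or.inl hEv)
      · rcases hv with rfl | hEv
        · exact Or.inl hEu
        · exact Or.inr (Or.inr ⟨i, hiW, hEu, hEv⟩)
    exact hvTB.2 this


variable {N : ℕ} {X : Fin N → Type*} [∀ i, Fintype (X i)] [∀ i, Nonempty (X i)]

/-- `f` depends only on coordinates in `S`. -/
def DependsOn (f : (∀ i, X i) → ℝ) (S : Finset (Fin N)) : Prop :=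
  ∀ x y, (∀ i ∈ S, x i = y i) → f x = f y

theorem dependsOn_mono {f : (∀ i, X i) → ℝ} {S T : Finset (Fin N)} (hST : S ⊆ T)
    (h : DependsOn f S) : DependsOn f T :=
  fun x y hxy => h x y (fun i hi => hxy i (hST hi))

theorem marg_congr (h : (∀ i, X i) → ℝ) (S : Finset (Fin N)) {x y : ∀ i, X i}
    (hxy : ∀ i ∈ S, x i = y i) : marg h S x = marg h S y := by
  unfold marg
  apply Finset.sum_congr rfl
  intro z _
  have : (∀ i ∈ S, z i = x i) ↔ (∀ i ∈ S, z i = y i) :=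
    ⟨fun hz i hi => (hz i hi).trans (hxy i hi), fun hz i hi => (hz i hi).trans (hxy i hi).symm⟩
  rw [if_congr this rfl rfl]

theorem marg_dependsOn (h : (∀ i, X i) → ℝ) (S : Finset (Fin N)) :
    DependsOn (fun x => marg h S x) S :=
  fun x y hxy => marg_congr h S hxy

theorem marg_pos {h : (∀ i, X i) → ℝ} (hp : ∀ x, 0 < h x) (S : Finset (Fin N))
    (x : ∀ i, X i) : 0 < marg h S x := by
  have h1 : (if ∀ i ∈ S, x i = x i then h x else 0) ≤ marg h S x := by
    apply Finset.single_le_sum (f := fun y => if ∀ i ∈ S, y i = x i then h y else 0)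
    · intro y _
      by_cases hc : ∀ i ∈ S, y i = x i
      · rw [if_pos hc]; exact (hp y).le
      · rw [if_neg hc]
    · exact Finset.mem_univ x
  rw [if_pos (fun i (_ : i ∈ S) => rfl)] at h1
  exact lt_of_lt_of_le (hp x) h1

theorem condP_pos {μ : (∀ i, X i) → ℝ} (hp : ∀ x, 0 < μ x) (i : Fin N)
    (S : Finset (Fin N)) (x : ∀ i, X i) : 0 < condP μ i S x :=
  div_pos (marg_pos hp _ x) (marg_pos hp _ x)

theorem condP_dependsOn (μ : (∀ i, X i) → ℝ) (i : Fin N) (S : Finset (Fin N)) :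
    DependsOn (fun x => condP μ i S x) (insert i S) := by
  intro x y hxy
  show condP μ i S x = condP μ i S y
  unfold condP
  rw [marg_congr μ (insert i S) hxy,
    marg_congr μ S (fun k hk => hxy k (Finset.mem_insert_of_mem hk))]

theorem sum_out (h : (∀ i, X i) → ℝ) (S : Finset (Fin N)) (j : Fin N) (hj : j ∉ S)
    (x : ∀ i, X i) :
    ∑ v : X j, marg h (insert j S) (Function.update x j v) = marg h S x := by
  classical
  unfold marg
  rw [Finset.sum_comm]
  apply Finset.sum_congr rfl
  intro y _
  have hiff : ∀ v : X j, (∀ i ∈ insert j S, y i = Function.update x j v i)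
      ↔ (y j = v ∧ ∀ i ∈ S, y i = x i) := by
    intro v
    constructor
    · intro hy
      refine ⟨by simpa using hy j (Finset.mem_insert_self _ _), fun i hi => ?_⟩
      have hij : i ≠ j := fun hij => hj (hij ▸ hi)
      have := hy i (Finset.mem_insert_of_mem hi)
      rwa [Function.update_of_ne hij] at this
    · rintro ⟨h1, h2⟩ i hi
      rcases Finset.mem_insert.1 hi with rfl | hi
      · simpa using h1
      · have hij : i ≠ j := fun hij => hj (hij ▸ hi)
        rw [Function.update_of_ne hij]; exact h2 i hi
  calc ∑ v : X j, (if ∀ i ∈ insert j S, y i = Function.update x j v i then h y else 0)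
      = ∑ v : X j, (if y j = v then (if (∀ i ∈ S, y i = x i) then h y else 0) else 0) := by
        apply Finset.sum_congr rfl; intro v _
        rw [if_congr (hiff v) rfl rfl, ite_and]
    _ = if (∀ i ∈ S, y i = x i) then h y else 0 := by
        rw [Finset.sum_ite_eq]
        simp

theorem marg_insens {h : (∀ i, X i) → ℝ} {Q : Finset (Fin N)} (hdep : DependsOn h Q)
    {j : Fin N} (hjQ : j ∉ Q) (S : Finset (Fin N)) (x : ∀ i, X i) (v : X j) :
    marg h S (Function.update x j v) = marg h S x := by
  classical
  let τ : X j ≃ X j := Equiv.swap v (x j)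
  let φ : (∀ i, X i) ≃ (∀ i, X i) :=
    { toFun := fun y => Function.update y j (τ (y j))
      invFun := fun y => Function.update y j (τ.symm (y j))
      left_inv := fun y => by
        ext i
        by_cases hi : i = j
        · subst hi; simp
        · simp [Function.update_of_ne hi]
      right_inv := fun y => by
        ext i
        by_cases hi : i = j
        · subst hi; simp
        · simp [Function.update_of_ne hi] }
  unfold marg
  rw [← Equiv.sum_comp φ]
  apply Finset.sum_congr rfl
  intro y _
  rw [show φ y = Function.update y j (τ (y j)) from rfl]
  have hval : h (Function.update y j (τ (y j))) = h y := by
    apply hdep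
    intro i hi
    have hij : i ≠ j := fun hij => hjQ (hij ▸ hi)
    exact Function.update_of_ne hij _ _
  have hj1 : τ (y j) = v ↔ y j = x j := by
    rw [Equiv.apply_eq_iff_eq_symm_apply]
    simp [τ]
  have hcond : (∀ i ∈ S, Function.update y j (τ (y j)) i = Function.update x j v i)
      ↔ (∀ i ∈ S, y i = x i) := by
    constructor
    · intro hy i hi
      by_cases hij : i = j
      · subst hij
        have h2 := hy i hi
        rw [Function.update_self, Function.update_self] at h2
        exact hj1.1 h2
      · have h2 := hy i hi
        rwa [Function.update_of_ne hij, Function.update_of_ne hij] at h2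
    · intro hy i hi
      by_cases hij : i = j
      · subst hij
        rw [Function.update_self, Function.update_self]
        exact hj1.2 (hy i hi)
      · rw [Function.update_of_ne hij, Function.update_of_ne hij]
        exact hy i hi
  rw [if_congr hcond rfl rfl, hval]

theorem marg_free {h : (∀ i, X i) → ℝ} {Q : Finset (Fin N)} (hdep : DependsOn h Q)
    (T : Finset (Fin N)) (hTQ : Disjoint T Q) :
    ∀ S : Finset (Fin N), Disjoint T S → ∀ x,
      marg h S x = (∏ i ∈ T, (Fintype.card (X i) : ℝ)) * marg h (S ∪ T) x := by
  classical
  induction T using Finset.induction_on with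
  | empty => intro S _ x; simp
  | @insert j T hjT ih =>
    intro S hdisj x
    have hjQ : j ∉ Q := Finset.disjoint_left.1 hTQ (Finset.mem_insert_self _ _)
    have hjS : j ∉ S := Finset.disjoint_left.1 hdisj (Finset.mem_insert_self _ _)
    have hTQ' : Disjoint T Q :=
      Finset.disjoint_of_subset_left (Finset.subset_insert _ _) hTQ
    have hTS : Disjoint T S :=
      Finset.disjoint_of_subset_left (Finset.subset_insert _ _) hdisj
    rw [ih hTQ' S hTS x]
    have e1 : marg h (S ∪ T) x
        = (Fintype.card (X j) : ℝ) * marg h (insert j (S ∪ T)) x := by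
      have hjST : j ∉ S ∪ T := by
        simp only [Finset.mem_union]
        rintro (h1 | h1)
        · exact hjS h1
        · exact hjT h1
      rw [← sum_out h (S ∪ T) j hjST x]
      have : ∀ v : X j, marg h (insert j (S ∪ T)) (Function.update x j v)
          = marg h (insert j (S ∪ T)) x := fun v => marg_insens hdep hjQ _ x v
      rw [Finset.sum_congr rfl (fun v _ => this v), Finset.sum_const]
      simp [mul_comm]
    rw [e1, Finset.prod_insert hjT]
    rw [show S ∪ insert j T = insert j (S ∪ T) from Finset.union_insert _ _ _]
    ring

theorem marg_univ (h : (∀ i, X i) → ℝ) (x : ∀ i, X i) :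
    marg h Finset.univ x = h x := by
  classical
  unfold marg
  have : ∀ y : ∀ i, X i, (∀ i ∈ (Finset.univ : Finset (Fin N)), y i = x i) ↔ y = x := by
    intro y
    constructor
    · intro hy; funext i; exact hy i (Finset.mem_univ i)
    · rintro rfl i _; rfl
  rw [Finset.sum_congr rfl (fun y _ => if_congr (this y) rfl rfl)]
  rw [Finset.sum_ite_eq' Finset.univ x h]
  simp

theorem marg_of_dep {h : (∀ i, X i) → ℝ} {S : Finset (Fin N)} (hdep : DependsOn h S)
    (x : ∀ i, X i) :
    marg h S x = h x * marg (fun _ => (1 : ℝ)) S x := by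
  unfold marg
  rw [Finset.mul_sum]
  apply Finset.sum_congr rfl
  intro y _
  by_cases hc : ∀ i ∈ S, y i = x i
  · rw [if_pos hc, if_pos hc, mul_one, hdep y x hc]
  · rw [if_neg hc, if_neg hc, mul_zero]

theorem marg_mul {f g : (∀ i, X i) → ℝ} {P Q : Finset (Fin N)}
    (hf : DependsOn f P) (hg : DependsOn g Q) :
    ∀ (S : Finset (Fin N)), P ∩ Q ⊆ S → ∀ x,
      marg (fun y => f y * g y) S x * marg (fun _ => (1 : ℝ)) S x
        = marg f S x * marg g S x := by
  classical
  suffices H : ∀ n (S : Finset (Fin N)), (Finset.univ \ S).card = n → P ∩ Q ⊆ S → ∀ x,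
      marg (fun y => f y * g y) S x * marg (fun _ => (1 : ℝ)) S x
        = marg f S x * marg g S x by
    intro S hS x; exact H _ S rfl hS x
  intro n
  induction n with
  | zero =>
    intro S hcard hS x
    have hSu : S = Finset.univ :=
      Finset.univ_subset_iff.1 (Finset.sdiff_eq_empty_iff_subset.1 (Finset.card_eq_zero.1 hcard))
    subst hSu
    rw [marg_univ, marg_univ, marg_univ, marg_univ]
    ring
  | succ n ih =>
    intro S hcard hS x
    have hne : (Finset.univ \ S).Nonempty := by
      rw [← Finset.card_pos, hcard]; omega
    obtain ⟨j, hj⟩ := hne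
    have hjS : j ∉ S := (Finset.mem_sdiff.1 hj).2
    have hcard' : (Finset.univ \ insert j S).card = n := by
      rw [show Finset.univ \ insert j S = (Finset.univ \ S).erase j by
        ext k
        simp only [Finset.mem_sdiff, Finset.mem_erase, Finset.mem_insert, Finset.mem_univ,
          true_and]
        tauto]
      rw [Finset.card_erase_of_mem hj, hcard]
      omega
    have hS' : P ∩ Q ⊆ insert j S := hS.trans (Finset.subset_insert _ _)
    have main : ∀ (f g : (∀ i, X i) → ℝ) (P Q : Finset (Fin N)),
        DependsOn f P → DependsOn g Q → j ∉ P →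
        (∀ x', marg (fun y => f y * g y) (insert j S) x'
            * marg (fun _ => (1 : ℝ)) (insert j S) x'
          = marg f (insert j S) x' * marg g (insert j S) x') →
        marg (fun y => f y * g y) S x * marg (fun _ => (1 : ℝ)) S x
          = marg f S x * marg g S x := by
      intro f g P Q hf hg hjP IH2
      rw [← sum_out (fun y => f y * g y) S j hjS x, ← sum_out (fun _ => (1 : ℝ)) S j hjS x,
          ← sum_out f S j hjS x, ← sum_out g S j hjS x]
      have h1 : ∀ v, marg (fun _ => (1 : ℝ)) (insert j S) (Function.update x j v)
          = marg (fun _ => (1 : ℝ)) (insert j S) x :=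
        fun v => marg_insens (h := fun _ => (1:ℝ)) (Q := ∅) (fun _ _ _ => rfl) (Finset.notMem_empty j) _ x v
      have hfv : ∀ v, marg f (insert j S) (Function.update x j v)
          = marg f (insert j S) x := fun v => marg_insens hf hjP _ x v
      rw [Finset.sum_congr rfl (fun v _ => h1 v), Finset.sum_congr rfl (fun v _ => hfv v),
        Finset.sum_const, Finset.sum_const, nsmul_eq_mul, nsmul_eq_mul]
      simp only [Finset.card_univ]
      have key : (∑ v : X j, marg (fun y => f y * g y) (insert j S) (Function.update x j v))
            * marg (fun _ => (1 : ℝ)) (insert j S) x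
          = marg f (insert j S) x
            * (∑ v : X j, marg g (insert j S) (Function.update x j v)) := by
        rw [Finset.sum_mul, Finset.mul_sum]
        apply Finset.sum_congr rfl
        intro v _
        rw [← hfv v, ← h1 v]
        exact IH2 (Function.update x j v)
      linear_combination (Fintype.card (X j) : ℝ) * key
    by_cases hjP : j ∈ P
    · have hjQ : j ∉ Q := fun hq => hjS (hS (Finset.mem_inter.2 ⟨hjP, hq⟩))
      have hres := main g f Q P hg hf hjQ (fun x' => by
        rw [show (fun y => g y * f y) = (fun y => f y * g y) from funext fun y => mul_comm _ _]
        rw [ih (insert j S) hcard' hS' x']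
        ring)
      rw [show (fun y => f y * g y) = (fun y => g y * f y) from funext fun y => mul_comm _ _]
      rw [hres]
      ring
    · exact main f g P Q hf hg hjP (fun x' => ih (insert j S) hcard' hS' x')

theorem marg_margW (μ : (∀ i, X i) → ℝ) (W : Finset (Fin N)) :
    ∀ (S : Finset (Fin N)), S ⊆ W → ∀ x,
      marg (fun y => marg μ W y) S x
        = marg μ S x * marg (fun _ => (1 : ℝ)) W x := by
  classical
  suffices H : ∀ n (S : Finset (Fin N)), (W \ S).card = n → S ⊆ W → ∀ x,
      marg (fun y => marg μ W y) S x
        = marg μ S x * marg (fun _ => (1 : ℝ)) W x by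
    intro S hS x; exact H _ S rfl hS x
  intro n
  induction n with
  | zero =>
    intro S hcard hSW x
    have hSu : S = W :=
      Finset.Subset.antisymm hSW (Finset.sdiff_eq_empty_iff_subset.1 (Finset.card_eq_zero.1 hcard))
    subst hSu
    exact marg_of_dep (marg_dependsOn μ S) x
  | succ n ih =>
    intro S hcard hSW x
    have hne : (W \ S).Nonempty := by
      rw [← Finset.card_pos, hcard]; omega
    obtain ⟨j, hj⟩ := hne
    rw [Finset.mem_sdiff] at hj
    have hins : insert j S ⊆ W := Finset.insert_subset hj.1 hSW
    have hcard' : (W \ insert j S).card = n := by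
      rw [show W \ insert j S = (W \ S).erase j by
        ext k
        simp only [Finset.mem_sdiff, Finset.mem_erase, Finset.mem_insert]
        tauto]
      rw [Finset.card_erase_of_mem (Finset.mem_sdiff.2 hj), hcard]
      omega
    rw [← sum_out (fun y => marg μ W y) S j hj.2 x, ← sum_out μ S j hj.2 x]
    rw [Finset.sum_congr rfl (fun v _ => ih (insert j S) hcard' hins (Function.update x j v))]
    rw [Finset.sum_congr rfl (fun v _ => by
      rw [marg_insens (h := fun _ => (1:ℝ)) (Q := ∅) (fun _ _ _ => rfl) (Finset.notMem_empty j) W x v])]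
    rw [← Finset.sum_mul]

theorem fact_marg (μ : (∀ i, X i) → ℝ) (hpos : ∀ x, 0 < μ x)
    (Pa : Fin N → Finset (Fin N))
    (hacyclic : ∀ v : Fin N, ¬ Relation.TransGen (fun k l => k ∈ Pa l) v v)
    (hfact : ∀ x, μ x = ∏ i : Fin N, condP μ i (Pa i) x) :
    ∀ (W : Finset (Fin N)), (∀ i ∈ W, Pa i ⊆ W) → ∀ x,
      marg μ W x = ∏ i ∈ W, condP μ i (Pa i) x := by
  classical
  suffices H : ∀ n (W : Finset (Fin N)), (Finset.univ \ W).card = n →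
      (∀ i ∈ W, Pa i ⊆ W) → ∀ x, marg μ W x = ∏ i ∈ W, condP μ i (Pa i) x by
    intro W hW x; exact H _ W rfl hW x
  intro n
  induction n with
  | zero =>
    intro W hcard _ x
    have hWu : W = Finset.univ :=
      Finset.univ_subset_iff.1 (Finset.sdiff_eq_empty_iff_subset.1 (Finset.card_eq_zero.1 hcard))
    subst hWu
    rw [marg_univ]
    exact hfact x
  | succ n ih =>
    intro W hcard hcl x
    have hne : (Finset.univ \ W).Nonempty := by
      rw [← Finset.card_pos, hcard]; omega
    haveI : IsTrans (Fin N) (Relation.TransGen (fun k l => k ∈ Pa l)) :=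
      ⟨fun _ _ _ => Relation.TransGen.trans⟩
    haveI : IsIrrefl (Fin N) (Relation.TransGen (fun k l => k ∈ Pa l)) := ⟨hacyclic⟩
    have hwf : WellFounded (Relation.TransGen (fun k l => k ∈ Pa l)) :=
      Finite.wellFounded_of_trans_of_irrefl _
    obtain ⟨j, hjmem, hjmin⟩ := hwf.has_min (↑(Finset.univ \ W) : Set (Fin N))
      (by obtain ⟨j, hj⟩ := hne; exact ⟨j, by simpa using hj⟩)
    have hjW : j ∉ W := by
      have := hjmem
      simp only [Finset.coe_sdiff, Set.mem_diff, Finset.mem_coe] at this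
      exact this.2
    have hPaj : Pa j ⊆ W := by
      intro p hp
      by_contra hpW
      exact hjmin p (by simp [Finset.mem_coe, Finset.mem_sdiff, hpW]) (Relation.TransGen.single hp)
    have hclosed' : ∀ i ∈ insert j W, Pa i ⊆ insert j W := by
      intro i hi
      rcases Finset.mem_insert.1 hi with rfl | hi
      · exact hPaj.trans (Finset.subset_insert _ _)
      · exact (hcl i hi).trans (Finset.subset_insert _ _)
    have hcard' : (Finset.univ \ insert j W).card = n := by
      rw [show Finset.univ \ insert j W = (Finset.univ \ W).erase j by
        ext k
        simp only [Finset.mem_sdiff, Finset.mem_erase, Finset.mem_insert, Finset.mem_univ,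
          true_and]
        tauto]
      rw [Finset.card_erase_of_mem (by simpa using hjW), hcard]
      omega
    have hIH : ∀ y, marg μ (insert j W) y = ∏ i ∈ insert j W, condP μ i (Pa i) y :=
      ih (insert j W) hcard' hclosed'
    have hconst : ∀ (v : X j) i, i ∈ W →
        condP μ i (Pa i) (Function.update x j v) = condP μ i (Pa i) x := by
      intro v i hi
      have hji : j ∉ insert i (Pa i) := by
        intro hj'
        rcases Finset.mem_insert.1 hj' with rfl | hj'
        · exact hjW hi
        · exact hjW (hcl i hi hj')
      unfold condP
      rw [marg_congr μ (insert i (Pa i)) (fun k hk =>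
          Function.update_of_ne (fun (he : k = j) => hji (he ▸ hk)) _ _),
        marg_congr μ (Pa i) (fun k hk =>
          Function.update_of_ne (fun (he : k = j) => hji (he ▸ Finset.mem_insert_of_mem hk)) _ _)]
    have hjPa : j ∉ Pa j := fun h => hacyclic j (Relation.TransGen.single h)
    have hsum1 : ∑ v : X j, condP μ j (Pa j) (Function.update x j v) = 1 := by
      unfold condP
      have hden : ∀ v : X j, marg μ (Pa j) (Function.update x j v) = marg μ (Pa j) x :=
        fun v => marg_congr μ _ (fun k hk =>
          Function.update_of_ne (fun (he : k = j) => hjPa (he ▸ hk)) _ _)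
      rw [Finset.sum_congr rfl (fun v _ => by rw [hden v])]
      rw [← Finset.sum_div, sum_out μ (Pa j) j hjPa x]
      exact div_self (ne_of_gt (marg_pos hpos _ x))
    rw [← sum_out μ W j hjW x]
    rw [Finset.sum_congr rfl (fun v _ => hIH (Function.update x j v))]
    rw [Finset.sum_congr rfl (fun v _ => Finset.prod_insert hjW)]
    rw [Finset.sum_congr rfl (fun v _ => by
      rw [Finset.prod_congr rfl (fun i hi => hconst v i hi)])]
    rw [← Finset.sum_mul, hsum1, one_mul]

set_option maxHeartbeats 1000000 in
theorem prob_main (μ : (∀ i, X i) → ℝ) (hpos : ∀ x, 0 < μ x)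
    (Pa : Fin N → Finset (Fin N))
    (hacyclic : ∀ v : Fin N, ¬ Relation.TransGen (fun k l => k ∈ Pa l) v v)
    (hfact : ∀ x, μ x = ∏ i : Fin N, condP μ i (Pa i) x)
    (W A B K TA TB : Finset (Fin N))
    (hWcl : ∀ i ∈ W, Pa i ⊆ W)
    (hAW : A ⊆ W) (hBW : B ⊆ W) (hKW : K ⊆ W)
    (hA : A ⊆ TA) (hB : B ⊆ TB)
    (hTAB : TA ∪ TB = W \ K) (hdisj : Disjoint TA TB)
    (hscope : ∀ i ∈ W, insert i (Pa i) ∩ TB = ∅ ∨ insert i (Pa i) ∩ TA = ∅) :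
    ∀ x, marg μ (A ∪ B ∪ K) x / marg μ (B ∪ K) x = marg μ (A ∪ K) x / marg μ K x := by
  classical
  have hTAW : TA ⊆ W \ K := hTAB ▸ Finset.subset_union_left
  have hTBW : TB ⊆ W \ K := hTAB ▸ Finset.subset_union_right
  have hTAK : Disjoint TA K :=
    Finset.disjoint_left.2 (fun {z} hzT hzK => (Finset.mem_sdiff.1 (hTAW hzT)).2 hzK)
  have hTBK : Disjoint TB K :=
    Finset.disjoint_left.2 (fun {z} hzT hzK => (Finset.mem_sdiff.1 (hTBW hzT)).2 hzK)
  have hAB : Disjoint A B := (hdisj.mono hA hB)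
  have hAK : Disjoint A K := hTAK.mono_left hA
  have hBK : Disjoint B K := hTBK.mono_left hB
  have hATB : Disjoint A TB := hdisj.mono_left hA
  have hBTA : Disjoint B TA := hdisj.symm.mono_left hB
  set f := fun y => ∏ i ∈ W.filter (fun i => insert i (Pa i) ∩ TB = ∅), condP μ i (Pa i) y
    with hfdef
  set g := fun y => ∏ i ∈ W.filter (fun i => ¬ insert i (Pa i) ∩ TB = ∅), condP μ i (Pa i) y
    with hgdef
  have hfg : ∀ y, marg μ W y = f y * g y := fun y => by
    rw [fact_marg μ hpos Pa hacyclic hfact W hWcl y]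
    exact (Finset.prod_filter_mul_prod_filter_not W _ _).symm
  have hscope_sub : ∀ i ∈ W, insert i (Pa i) ⊆ W := fun i hi =>
    Finset.insert_subset hi (hWcl i hi)
  have hdepf : DependsOn f (TA ∪ K) := by
    intro x y hxy
    apply Finset.prod_congr rfl
    intro i hi
    rw [Finset.mem_filter] at hi
    apply condP_dependsOn μ i (Pa i) x y
    intro k hk
    apply hxy
    have hkW : k ∈ W := hscope_sub i hi.1 hk
    have hkTB : k ∉ TB := fun hkTB => by
      have hmem : k ∈ insert i (Pa i) ∩ TB := Finset.mem_inter.2 ⟨hk, hkTB⟩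
      rw [hi.2] at hmem
      exact absurd hmem (Finset.notMem_empty k)
    by_cases hkK : k ∈ K
    · exact Finset.mem_union_right _ hkK
    · have hmem : k ∈ TA ∪ TB := by rw [hTAB]; exact Finset.mem_sdiff.2 ⟨hkW, hkK⟩
      rcases Finset.mem_union.1 hmem with h | h
      · exact Finset.mem_union_left _ h
      · exact absurd h hkTB
  have hdepg : DependsOn g (TB ∪ K) := by
    intro x y hxy
    apply Finset.prod_congr rfl
    intro i hi
    rw [Finset.mem_filter] at hi
    apply condP_dependsOn μ i (Pa i) x y
    intro k hk
    apply hxy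
    have hkW : k ∈ W := hscope_sub i hi.1 hk
    have hTA : insert i (Pa i) ∩ TA = ∅ := (hscope i hi.1).resolve_left hi.2
    have hkTA : k ∉ TA := fun hkTA => by
      have hmem : k ∈ insert i (Pa i) ∩ TA := Finset.mem_inter.2 ⟨hk, hkTA⟩
      rw [hTA] at hmem
      exact absurd hmem (Finset.notMem_empty k)
    by_cases hkK : k ∈ K
    · exact Finset.mem_union_right _ hkK
    · have hmem : k ∈ TA ∪ TB := by rw [hTAB]; exact Finset.mem_sdiff.2 ⟨hkW, hkK⟩
      rcases Finset.mem_union.1 hmem with h | h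
      · exact absurd h hkTA
      · exact Finset.mem_union_left _ h
  have hfpos : ∀ y, 0 < f y := fun y => Finset.prod_pos (fun i _ => condP_pos hpos _ _ y)
  have hgpos : ∀ y, 0 < g y := fun y => Finset.prod_pos (fun i _ => condP_pos hpos _ _ y)
  have hPQ : (TA ∪ K) ∩ (TB ∪ K) ⊆ K := by
    intro z hz
    rw [Finset.mem_inter, Finset.mem_union, Finset.mem_union] at hz
    rcases hz.1 with h1 | h1
    · rcases hz.2 with h2 | h2
      · exact absurd h2 (Finset.disjoint_left.1 hdisj h1)
      · exact h2
    · exact h1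
  intro x
  have key : ∀ S : Finset (Fin N), K ⊆ S → S ⊆ W →
      marg μ S x * (marg (fun _ => (1 : ℝ)) W x * marg (fun _ => (1 : ℝ)) S x)
        = marg f S x * marg g S x := by
    intro S hKS hSW
    have h1 := marg_margW μ W S hSW x
    have h2 := marg_mul hdepf hdepg S (hPQ.trans hKS) x
    have h3 : marg (fun y => marg μ W y) S x = marg (fun y => f y * g y) S x := by
      rw [show (fun y => marg μ W y) = (fun y => f y * g y) from funext hfg]
    rw [← h2, ← h3, h1]
    ring
  have hSW1 : A ∪ B ∪ K ⊆ W := Finset.union_subset (Finset.union_subset hAW hBW) hKW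
  have k1 := key (A ∪ B ∪ K) Finset.subset_union_right hSW1
  have k2 := key (B ∪ K) Finset.subset_union_right (Finset.union_subset hBW hKW)
  have k3 := key (A ∪ K) Finset.subset_union_right (Finset.union_subset hAW hKW)
  have k4 := key K (Finset.Subset.refl K) hKW
  have honeD : DependsOn (X := X) (fun _ => (1 : ℝ)) (∅ : Finset (Fin N)) := fun _ _ _ => rfl
  have hsetBo : A ∪ K ∪ B = A ∪ B ∪ K := by ext z; simp [Finset.mem_union]; tauto
  have hsetKB : K ∪ B = B ∪ K := by ext z; simp [Finset.mem_union]; tauto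
  have hsetBA : B ∪ K ∪ A = A ∪ B ∪ K := by ext z; simp [Finset.mem_union]; tauto
  have hsetKA : K ∪ A = A ∪ K := by ext z; simp [Finset.mem_union]; tauto
  have hdBP : Disjoint B (TA ∪ K) := Finset.disjoint_union_right.2 ⟨hBTA, hBK⟩
  have hdAQ : Disjoint A (TB ∪ K) := Finset.disjoint_union_right.2 ⟨hATB, hAK⟩
  have e1 : marg f (A ∪ K) x = (∏ i ∈ B, (Fintype.card (X i) : ℝ)) * marg f (A ∪ B ∪ K) x := by
    have h := marg_free hdepf B hdBP (A ∪ K)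
      (Finset.disjoint_union_right.2 ⟨hAB.symm, hBK⟩) x
    rwa [hsetBo] at h
  have e2 : marg f K x = (∏ i ∈ B, (Fintype.card (X i) : ℝ)) * marg f (B ∪ K) x := by
    have h := marg_free hdepf B hdBP K hBK x
    rwa [hsetKB] at h
  have e3 : marg g (B ∪ K) x = (∏ i ∈ A, (Fintype.card (X i) : ℝ)) * marg g (A ∪ B ∪ K) x := by
    have h := marg_free hdepg A hdAQ (B ∪ K)
      (Finset.disjoint_union_right.2 ⟨hAB, hAK⟩) x
    rwa [hsetBA] at h
  have e4 : marg g K x = (∏ i ∈ A, (Fintype.card (X i) : ℝ)) * marg g (A ∪ K) x := by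
    have h := marg_free hdepg A hdAQ K hAK x
    rwa [hsetKA] at h
  have e5 : marg (fun _ => (1 : ℝ)) (B ∪ K) x
      = (∏ i ∈ A, (Fintype.card (X i) : ℝ)) * marg (fun _ => (1 : ℝ)) (A ∪ B ∪ K) x := by
    have h := marg_free honeD A (Finset.disjoint_empty_right A) (B ∪ K)
      (Finset.disjoint_union_right.2 ⟨hAB, hAK⟩) x
    rwa [hsetBA] at h
  have e6 : marg (fun _ => (1 : ℝ)) (A ∪ K) x
      = (∏ i ∈ B, (Fintype.card (X i) : ℝ)) * marg (fun _ => (1 : ℝ)) (A ∪ B ∪ K) x := by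
    have h := marg_free honeD B (Finset.disjoint_empty_right B) (A ∪ K)
      (Finset.disjoint_union_right.2 ⟨hAB.symm, hBK⟩) x
    rwa [hsetBo] at h
  have e7 : marg (fun _ => (1 : ℝ)) K x
      = (∏ i ∈ A, (Fintype.card (X i) : ℝ)) * marg (fun _ => (1 : ℝ)) (A ∪ K) x := by
    have h := marg_free honeD A (Finset.disjoint_empty_right A) K hAK x
    rwa [hsetKA] at h
  -- positivity of everything
  have hmW : 0 < marg (fun _ => (1 : ℝ)) W x := marg_pos (fun _ => one_pos) W x
  have hm1 : 0 < marg (fun _ => (1 : ℝ)) (A ∪ B ∪ K) x := marg_pos (fun _ => one_pos) _ x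
  have hF1 : 0 < marg f (A ∪ B ∪ K) x := marg_pos hfpos _ x
  have hF2 : 0 < marg f (B ∪ K) x := marg_pos hfpos _ x
  have hG1 : 0 < marg g (A ∪ B ∪ K) x := marg_pos hgpos _ x
  have hG3 : 0 < marg g (A ∪ K) x := marg_pos hgpos _ x
  have hM2 : 0 < marg μ (B ∪ K) x := marg_pos hpos _ x
  have hM4 : 0 < marg μ K x := marg_pos hpos _ x
  have hcA : (0 : ℝ) < ∏ i ∈ A, (Fintype.card (X i) : ℝ) :=
    Finset.prod_pos (fun i _ => by exact_mod_cast Fintype.card_pos)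
  have hcB : (0 : ℝ) < ∏ i ∈ B, (Fintype.card (X i) : ℝ) :=
    Finset.prod_pos (fun i _ => by exact_mod_cast Fintype.card_pos)
  rw [div_eq_div_iff (ne_of_gt hM2) (ne_of_gt hM4)]
  rw [e3, e5] at k2
  rw [e1, e6] at k3
  rw [e2, e4, e7, e6] at k4
  have hq1 : marg μ (A ∪ B ∪ K) x
      = marg f (A ∪ B ∪ K) x * marg g (A ∪ B ∪ K) x
        / (marg (fun _ => (1 : ℝ)) W x * marg (fun _ => (1 : ℝ)) (A ∪ B ∪ K) x) := by
    rw [eq_div_iff (by positivity)]; exact k1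
  have hq2 : marg μ (B ∪ K) x
      = marg f (B ∪ K) x * ((∏ i ∈ A, (Fintype.card (X i) : ℝ)) * marg g (A ∪ B ∪ K) x)
        / (marg (fun _ => (1 : ℝ)) W x * ((∏ i ∈ A, (Fintype.card (X i) : ℝ))
            * marg (fun _ => (1 : ℝ)) (A ∪ B ∪ K) x)) := by
    rw [eq_div_iff (by positivity)]; exact k2
  have hq3 : marg μ (A ∪ K) x
      = (∏ i ∈ B, (Fintype.card (X i) : ℝ)) * marg f (A ∪ B ∪ K) x * marg g (A ∪ K) x
        / (marg (fun _ => (1 : ℝ)) W x * ((∏ i ∈ B, (Fintype.card (X i) : ℝ))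
            * marg (fun _ => (1 : ℝ)) (A ∪ B ∪ K) x)) := by
    rw [eq_div_iff (by positivity)]; exact k3
  have hq4 : marg μ K x
      = (∏ i ∈ B, (Fintype.card (X i) : ℝ)) * marg f (B ∪ K) x
          * ((∏ i ∈ A, (Fintype.card (X i) : ℝ)) * marg g (A ∪ K) x)
        / (marg (fun _ => (1 : ℝ)) W x * ((∏ i ∈ A, (Fintype.card (X i) : ℝ))
            * ((∏ i ∈ B, (Fintype.card (X i) : ℝ))
              * marg (fun _ => (1 : ℝ)) (A ∪ B ∪ K) x))) := by
    rw [eq_div_iff (by positivity)]; exact k4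
  rw [hq1, hq2, hq3, hq4]
  have n1 : marg (fun _ => (1 : ℝ)) W x ≠ 0 := ne_of_gt hmW
  have n2 : marg (fun _ => (1 : ℝ)) (A ∪ B ∪ K) x ≠ 0 := ne_of_gt hm1
  have n3 : (∏ i ∈ A, (Fintype.card (X i) : ℝ)) ≠ 0 := ne_of_gt hcA
  have n4 : (∏ i ∈ B, (Fintype.card (X i) : ℝ)) ≠ 0 := ne_of_gt hcB
  field_simp

end S14

/-- global Markov property, soundness: if the strictly positive `μ`
factorizes minimally according to the DAG with parents `Pa`, then for pairwise
disjoint coordinate sets `A`, `B`, `K`, d-separation of `A` from `B` by `K` implies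
conditional independence of `A` and `B` given `K` under `μ`. -/

theorem stmt14 {N : ℕ} {X : Fin N → Type*} [∀ i, Fintype (X i)] [∀ i, Nonempty (X i)]
    (μ : (∀ i, X i) → ℝ) (hpos : ∀ x, 0 < μ x) (hsum : ∑ x, μ x = 1)
    (Pa : Fin N → Finset (Fin N))
    (hacyclic : ∀ v : Fin N, ¬ Relation.TransGen (fun k l => k ∈ Pa l) v v)
    (hfact : ∀ x, μ x = ∏ i : Fin N, condP μ i (Pa i) x)
    (hmin : ∀ T : Fin N → Finset (Fin N), (∀ i, T i ⊆ Pa i) →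
      (∀ x, μ x = ∏ i : Fin N, condP μ i (T i) x) → T = Pa)
    (A B K : Finset (Fin N))
    (hAB : Disjoint A B) (hAK : Disjoint A K) (hBK : Disjoint B K)
    (hsep : DSep (fun k l => k ∈ Pa l) (↑A) (↑B) (↑K)) :
    CI μ A B K := by
  classical
  set W : Finset (Fin N) := (A ∪ B ∪ K) ∪ Finset.univ.filter
    (fun v => ∃ u ∈ A ∪ B ∪ K, Relation.TransGen (fun k l => k ∈ Pa l) v u) with hWdef
  have hABKW : A ∪ B ∪ K ⊆ W := Finset.subset_union_left
  have hAW : A ⊆ W := (Finset.subset_union_left.trans Finset.subset_union_left).trans hABKW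
  have hBW : B ⊆ W := (Finset.subset_union_right.trans Finset.subset_union_left).trans hABKW
  have hKW : K ⊆ W := Finset.subset_union_right.trans hABKW
  have hWanc : ∀ c ∈ W, c ∈ A ∪ B ∪ K ∨
      ∃ u ∈ A ∪ B ∪ K, Relation.TransGen (fun k l => k ∈ Pa l) c u := by
    intro c hc
    rcases Finset.mem_union.1 hc with h | h
    · exact Or.inl h
    · exact Or.inr (by simpa using (Finset.mem_filter.1 h).2)
  have hWcl : ∀ i ∈ W, Pa i ⊆ W := by
    intro i hi p hp
    have hpi : Relation.TransGen (fun k l => k ∈ Pa l) p i := Relation.TransGen.single hp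
    rcases hWanc i hi with h | ⟨u, hu, htg⟩
    · exact Finset.mem_union_right _ (Finset.mem_filter.2 ⟨Finset.mem_univ p, i, h, hpi⟩)
    · exact Finset.mem_union_right _
        (Finset.mem_filter.2 ⟨Finset.mem_univ p, u, hu, hpi.trans htg⟩)
  obtain ⟨TA, TB, hTA, hTB, hTAB, hTdisj, hsc⟩ :=
    S14.graph_main (fun k l => k ∈ Pa l) hacyclic A B K W hAW hBW hWanc hAK hBK hsep
  have hscope : ∀ i ∈ W, insert i (Pa i) ∩ TB = ∅ ∨ insert i (Pa i) ∩ TA = ∅ := by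
    intro i hi
    by_contra hcon
    push_neg at hcon
    obtain ⟨v, hv⟩ := hcon.1
    obtain ⟨u, hu⟩ := hcon.2
    rw [Finset.mem_inter] at hv hu
    have hu' : u = i ∨ u ∈ Pa i := Finset.mem_insert.1 hu.1
    have hv' : v = i ∨ v ∈ Pa i := Finset.mem_insert.1 hv.1
    exact hsc i hi u v hu' hv' ⟨hu.2, hv.2⟩
  exact S14.prob_main μ hpos Pa hacyclic hfact W A B K TA TB hWcl hAW hBW hKW
    hTA hTB hTAB hTdisj hscope
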